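/- If b = f(a) where f_1(x)=x_1 and f_k(x) = x_k − Σ_{j=1}^{k−1} C(k−1,j−1) f_j(x) x_{k−j} for k > 1 (i.e., b is the cumulant sequence of a), and d = f(c) where c is the factorial-moment sequence of a, then b_k = Σ_{j=1}^k S_2(k,j) f_j(c) for all k ≥ 1. -/

import Mathlib

open Finset

/-- Stirling numbers of the second kind. -/
def stirling2 : ℕ → ℕ → ℕ
  | 0, 0 => 1
  | 0, _ + 1 => 0
  | _ + 1, 0 => 0
  | n + 1, k + 1 => (k + 1) * stirling2 n (k + 1) + stirling2 n k

/-- The transformation producing cumulants from moments: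
`f 1 x = x 1`, `f k x = x k − Σ_{j=1}^{k−1} C(k−1,j−1) f j x · x (k−j)`. -/
noncomputable def fcum (c : ℕ → ℝ) : ℕ → ℝ
  | 0 => 0
  | k + 1 => c (k + 1) - ∑ j ∈ (Finset.range k).attach,
      (k.choose j.1 : ℝ) * fcum c (j.1 + 1) * c (k - j.1)
decreasing_by
  have := j.2
  simp only [Finset.mem_range] at this
  omega

lemma stirling2_eq_zero : ∀ {n k : ℕ}, n < k → stirling2 n k = 0 := by
  intro n
  induction n with
  | zero => intro k h; match k, h with | k+1, _ => rfl
  | succ n ih =>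
    intro k h
    match k, h with
    | k+1, h =>
      have h1 : n < k := by omega
      have h2 : n < k + 1 := by omega
      show (k + 1) * stirling2 n (k + 1) + stirling2 n k = 0
      rw [ih h1, ih h2]; ring

lemma stirling2_succ (n k : ℕ) :
    stirling2 (n+1) (k+1) = (k + 1) * stirling2 n (k + 1) + stirling2 n k := rfl

lemma stirling2_succ_zero (n : ℕ) : stirling2 (n+1) 0 = 0 := rfl

/-- Key identity: `C(l+q,l) S(n+1,l+q+1) = Σ_j C(n,j) S(j+1,l+1) S(n-j,q)`. -/
lemma star (n : ℕ) : ∀ l q : ℕ,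
    (l+q).choose l * stirling2 (n+1) (l+q+1)
      = ∑ j ∈ range (n+1), n.choose j * stirling2 (j+1) (l+1) * stirling2 (n-j) q := by
  induction n with
  | zero =>
    intro l q
    cases l <;> cases q <;> simp [stirling2_succ, stirling2]
  | succ n ih =>
    intro l q
    have key : ∑ j ∈ range (n+2), (n+1).choose j * stirling2 (j+1) (l+1) * stirling2 (n+1-j) q
        = (∑ j ∈ range (n+1), n.choose j * stirling2 (j+2) (l+1) * stirling2 (n-j) q)
          + ∑ j ∈ range (n+1), n.choose j * stirling2 (j+1) (l+1) * stirling2 (n+1-j) q := by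
      rw [Finset.sum_range_succ' (fun j => (n+1).choose j * stirling2 (j+1) (l+1) * stirling2 (n+1-j) q) (n+1)]
      have e1 : ∀ j ∈ range (n+1),
          (n+1).choose (j+1) * stirling2 (j+1+1) (l+1) * stirling2 (n+1-(j+1)) q
          = n.choose j * stirling2 (j+2) (l+1) * stirling2 (n-j) q
            + n.choose (j+1) * stirling2 ((j+1)+1) (l+1) * stirling2 (n+1-(j+1)) q := by
        intro j hj
        simp only [mem_range] at hj
        have h1 : n + 1 - (j+1) = n - j := by omega
        rw [Nat.choose_succ_succ, h1]
        ring
      rw [Finset.sum_congr rfl e1, Finset.sum_add_distrib, add_assoc]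
      congr 1
      rw [Finset.sum_range_succ' (fun j => n.choose j * stirling2 (j+1) (l+1) * stirling2 (n+1-j) q) n]
      rw [Finset.sum_range_succ (fun j => n.choose (j+1) * stirling2 ((j+1)+1) (l+1) * stirling2 (n+1-(j+1)) q) n]
      have hz : n.choose (n+1) = 0 := Nat.choose_eq_zero_of_lt (by omega)
      rw [hz]
      simp
    rw [key]
    have eA : ∀ j ∈ range (n+1),
        n.choose j * stirling2 (j+2) (l+1) * stirling2 (n-j) q
        = (l+1) * (n.choose j * stirling2 (j+1) (l+1) * stirling2 (n-j) q)
          + n.choose j * stirling2 (j+1) l * stirling2 (n-j) q := by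
      intro j _
      have e : stirling2 (j+2) (l+1) = (l+1) * stirling2 (j+1) (l+1) + stirling2 (j+1) l :=
        stirling2_succ (j+1) l
      rw [e]; ring
    rw [Finset.sum_congr rfl eA, Finset.sum_add_distrib, ← Finset.mul_sum, ← ih l q]
    cases q with
    | zero =>
      have eB : ∀ j ∈ range (n+1),
          n.choose j * stirling2 (j+1) (l+1) * stirling2 (n+1-j) 0 = 0 := by
        intro j hj; simp only [mem_range] at hj
        have h : n + 1 - j = (n - j) + 1 := by omega
        rw [h, stirling2_succ_zero]; ring
      rw [Finset.sum_congr rfl eB, Finset.sum_const_zero]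
      cases l with
      | zero =>
        have z : ∀ j ∈ range (n+1), n.choose j * stirling2 (j+1) 0 * stirling2 (n-j) 0 = 0 := by
          intro j _; rw [stirling2_succ_zero]; ring
        rw [Finset.sum_congr rfl z, Finset.sum_const_zero]
        show (0+0).choose 0 * stirling2 (n+1+1) (0+0+1)
            = (0+1) * ((0+0).choose 0 * stirling2 (n+1) (0+0+1)) + 0 + 0
        norm_num
        show 1 * stirling2 (n+1) 1 + stirling2 (n+1) 0 = stirling2 (n+1) 1
        rw [stirling2_succ_zero]; ring
      | succ l' =>
        rw [← ih l' 0]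
        show (l'+1+0).choose (l'+1) * stirling2 (n+1+1) (l'+1+0+1)
            = (l'+1+1) * ((l'+1+0).choose (l'+1) * stirling2 (n+1) (l'+1+0+1))
              + (l'+0).choose l' * stirling2 (n+1) (l'+0+1) + 0
        simp only [Nat.add_zero, Nat.choose_self, one_mul, add_zero]
        show (l'+1+1) * stirling2 (n+1) (l'+1+1) + stirling2 (n+1) (l'+1) = _
        ring
    | succ q' =>
      have eB : ∀ j ∈ range (n+1),
          n.choose j * stirling2 (j+1) (l+1) * stirling2 (n+1-j) (q'+1)
          = (q'+1) * (n.choose j * stirling2 (j+1) (l+1) * stirling2 (n-j) (q'+1))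
            + n.choose j * stirling2 (j+1) (l+1) * stirling2 (n-j) q' := by
        intro j hj; simp only [mem_range] at hj
        have h : n + 1 - j = (n - j) + 1 := by omega
        rw [h]
        have e : stirling2 ((n-j)+1) (q'+1)
            = (q'+1) * stirling2 (n-j) (q'+1) + stirling2 (n-j) q' := stirling2_succ (n-j) q'
        rw [e]; ring
      rw [Finset.sum_congr rfl eB, Finset.sum_add_distrib, ← Finset.mul_sum,
        ← ih l (q'+1), ← ih l q']
      cases l with
      | zero =>
        have z : ∀ j ∈ range (n+1), n.choose j * stirling2 (j+1) 0 * stirling2 (n-j) (q'+1) = 0 := by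
          intro j _; rw [stirling2_succ_zero]; ring
        rw [Finset.sum_congr rfl z, Finset.sum_const_zero]
        show (0+(q'+1)).choose 0 * stirling2 (n+1+1) (0+(q'+1)+1)
            = (0+1) * ((0+(q'+1)).choose 0 * stirling2 (n+1) (0+(q'+1)+1)) + 0
              + ((q'+1) * ((0+(q'+1)).choose 0 * stirling2 (n+1) (0+(q'+1)+1))
                 + (0+q').choose 0 * stirling2 (n+1) (0+q'+1))
        simp only [Nat.zero_add, Nat.choose_zero_right, one_mul, add_zero]
        have e : stirling2 (n+1+1) (q'+1+1)
            = (q'+1+1) * stirling2 (n+1) (q'+1+1) + stirling2 (n+1) (q'+1) :=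
          stirling2_succ (n+1) (q'+1)
        rw [e]; ring
      | succ l' =>
        rw [← ih l' (q'+1)]
        have i1 : l' + 1 + (q' + 1) + 1 = l' + q' + 2 + 1 := by omega
        have i2 : l' + (q' + 1) + 1 = l' + q' + 2 := by omega
        have i3 : l' + 1 + q' + 1 = l' + q' + 2 := by omega
        rw [i1, i2, i3]
        have e : stirling2 (n+1+1) (l'+q'+2+1)
            = (l'+q'+2+1) * stirling2 (n+1) (l'+q'+2+1) + stirling2 (n+1) (l'+q'+2) :=
          stirling2_succ (n+1) (l'+q'+2)
        have pas : (l'+1+(q'+1)).choose (l'+1) = (l'+(q'+1)).choose l' + (l'+1+q').choose (l'+1) := by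
          have h := Nat.choose_succ_succ (l'+q'+1) l'
          have h1 : l'+1+(q'+1) = l'+q'+1+1 := by omega
          have h2 : l'+(q'+1) = l'+q'+1 := by omega
          have h3 : l'+1+q' = l'+q'+1 := by omega
          rw [h1, h2, h3, h]
        rw [e, pas]
        ring

lemma fcum_succ (c : ℕ → ℝ) (k : ℕ) :
    fcum c (k+1) = c (k+1) - ∑ j ∈ range k, (k.choose j : ℝ) * fcum c (j+1) * c (k-j) := by
  rw [fcum]
  congr 1
  exact Finset.sum_attach (range k) (fun j => (k.choose j : ℝ) * fcum c (j + 1) * c (k - j))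

lemma Icc_one (f : ℕ → ℝ) (n : ℕ) : ∑ p ∈ Icc 1 (n+1), f p = ∑ s ∈ range (n+1), f (s+1) := by
  rw [← Finset.Ico_add_one_right_eq_Icc, Finset.sum_Ico_eq_sum_range]
  exact Finset.sum_congr (by norm_num) fun s _ => by rw [add_comm]

/-- The T-side rearrangement. -/
lemma Tlemma (u v : ℕ → ℝ) (n : ℕ) :
    ∑ s ∈ range (n+1), (stirling2 (n+1) (s+1) : ℝ)
        * ∑ m ∈ range s, (s.choose m : ℝ) * u (m+1) * v (s-m)
    = ∑ l ∈ range (n+1), ∑ q ∈ Icc 1 (n+1),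
        ((l+q).choose l : ℝ) * (stirling2 (n+1) (l+q+1) : ℝ) * u (l+1) * v q := by
  have lhs_eq : ∑ s ∈ range (n+1), (stirling2 (n+1) (s+1) : ℝ)
        * ∑ m ∈ range s, (s.choose m : ℝ) * u (m+1) * v (s-m)
      = ∑ x ∈ (range (n+1)).sigma (fun s => range s),
          (stirling2 (n+1) (x.1+1) : ℝ) * ((x.1.choose x.2 : ℝ) * u (x.2+1) * v (x.1-x.2)) := by
    rw [Finset.sum_sigma]
    exact Finset.sum_congr rfl fun s _ => by rw [Finset.mul_sum]
  have rhs_eq : ∑ l ∈ range (n+1), ∑ q ∈ Icc 1 (n+1),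
        ((l+q).choose l : ℝ) * (stirling2 (n+1) (l+q+1) : ℝ) * u (l+1) * v q
      = ∑ y ∈ (range (n+1) ×ˢ Icc 1 (n+1)).filter (fun y => y.1 + y.2 ≤ n),
          ((y.1+y.2).choose y.1 : ℝ) * (stirling2 (n+1) (y.1+y.2+1) : ℝ) * u (y.1+1) * v y.2 := by
    rw [Finset.sum_filter, Finset.sum_product]
    refine Finset.sum_congr rfl fun l _ => Finset.sum_congr rfl fun q _ => ?_
    by_cases h : l + q ≤ n
    · rw [if_pos h]
    · rw [if_neg h, stirling2_eq_zero (show n+1 < l+q+1 by omega)]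
      push_cast
      ring
  rw [lhs_eq, rhs_eq]
  refine Finset.sum_nbij' (fun x => (x.2, x.1 - x.2)) (fun y => ⟨y.1 + y.2, y.1⟩) ?_ ?_ ?_ ?_ ?_
  · intro x hx
    simp only [Finset.mem_sigma, mem_range] at hx
    simp only [mem_filter, mem_product, mem_range, mem_Icc]
    omega
  · intro y hy
    simp only [mem_filter, mem_product, mem_range, mem_Icc] at hy
    simp only [Finset.mem_sigma, mem_range]
    omega
  · intro x hx
    simp only [Finset.mem_sigma, mem_range] at hx
    have : x.2 + (x.1 - x.2) = x.1 := by omega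
    simp [this]
  · intro y hy
    simp only [mem_filter, mem_product, mem_range, mem_Icc] at hy
    simp [Nat.add_sub_cancel_left]
  · intro x hx
    simp only [Finset.mem_sigma, mem_range] at hx
    have h : x.2 + (x.1 - x.2) = x.1 := by omega
    rw [h]
    ring

/-- The R-side rearrangement. -/
lemma Rlemma (u v : ℕ → ℝ) (n : ℕ) :
    ∑ j ∈ range (n+1), (n.choose j : ℝ)
        * ((∑ p ∈ Icc 1 (n+1), (stirling2 (j+1) p : ℝ) * u p)
            * (∑ q ∈ Icc 1 (n+1), (stirling2 (n-j) q : ℝ) * v q))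
    = ∑ l ∈ range (n+1), ∑ q ∈ Icc 1 (n+1),
        ((l+q).choose l : ℝ) * (stirling2 (n+1) (l+q+1) : ℝ) * u (l+1) * v q := by
  have h1 : ∀ j ∈ range (n+1), (n.choose j : ℝ)
        * ((∑ p ∈ Icc 1 (n+1), (stirling2 (j+1) p : ℝ) * u p)
            * (∑ q ∈ Icc 1 (n+1), (stirling2 (n-j) q : ℝ) * v q))
      = ∑ p ∈ Icc 1 (n+1), ∑ q ∈ Icc 1 (n+1),
          (n.choose j : ℝ) * (stirling2 (j+1) p : ℝ) * (stirling2 (n-j) q : ℝ) * u p * v q := by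
    intro j _
    rw [Finset.sum_mul_sum, Finset.mul_sum]
    refine Finset.sum_congr rfl fun p _ => ?_
    rw [Finset.mul_sum]
    refine Finset.sum_congr rfl fun q _ => ?_
    ring
  rw [Finset.sum_congr rfl h1, Finset.sum_comm]
  rw [Icc_one (fun p => ∑ j ∈ range (n+1), ∑ q ∈ Icc 1 (n+1),
      (n.choose j : ℝ) * (stirling2 (j+1) p : ℝ) * (stirling2 (n-j) q : ℝ) * u p * v q) n]
  refine Finset.sum_congr rfl fun l _ => ?_
  rw [Finset.sum_comm]
  refine Finset.sum_congr rfl fun q _ => ?_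
  have hstar : ((l+q).choose l : ℝ) * (stirling2 (n+1) (l+q+1) : ℝ)
      = ∑ j ∈ range (n+1), (n.choose j : ℝ) * (stirling2 (j+1) (l+1) : ℝ) * (stirling2 (n-j) q : ℝ) := by
    have := star n l q
    have h2 : (((l+q).choose l * stirling2 (n+1) (l+q+1) : ℕ) : ℝ)
        = ((∑ j ∈ range (n+1), n.choose j * stirling2 (j+1) (l+1) * stirling2 (n-j) q : ℕ) : ℝ) := by
      exact Nat.cast_inj.mpr this
    push_cast at h2
    exact h2
  calc ∑ j ∈ range (n+1), (n.choose j : ℝ) * (stirling2 (j+1) (l+1) : ℝ) * (stirling2 (n-j) q : ℝ) * u (l+1) * v q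
      = (∑ j ∈ range (n+1), (n.choose j : ℝ) * (stirling2 (j+1) (l+1) : ℝ) * (stirling2 (n-j) q : ℝ)) * (u (l+1) * v q) := by
        rw [Finset.sum_mul]
        exact Finset.sum_congr rfl fun j _ => by ring
    _ = ((l+q).choose l : ℝ) * (stirling2 (n+1) (l+q+1) : ℝ) * u (l+1) * v q := by
        rw [← hstar]; ring

/-- If `a` is related to `c` by `a_k = Σ_{j=1}^k S_2(k,j) c_j` (i.e. `c` is the factorial-moment
sequence of `a`), and `b = f(a)` is the cumulant sequence of `a`, then
`b_k = Σ_{j=1}^k S_2(k,j) f_j(c)`. -/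
theorem cumulants_via_factorial_cumulants (a b c : ℕ → ℝ)
    (hac : ∀ k, 1 ≤ k → a k = ∑ j ∈ Finset.Icc 1 k, (stirling2 k j : ℝ) * c j)
    (hb : ∀ k, b k = fcum a k) :
    ∀ k, 1 ≤ k → b k = ∑ j ∈ Finset.Icc 1 k, (stirling2 k j : ℝ) * fcum c j := by
  have main : ∀ n, fcum a (n+1) = ∑ j ∈ Icc 1 (n+1), (stirling2 (n+1) j : ℝ) * fcum c j := by
    intro n
    induction n using Nat.strong_induction_on with
    | _ n IH =>
    rw [fcum_succ]
    have hterm : ∀ j ∈ range n, (n.choose j : ℝ) * fcum a (j+1) * a (n-j)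
        = (n.choose j : ℝ) * ((∑ p ∈ Icc 1 (n+1), (stirling2 (j+1) p : ℝ) * fcum c p)
            * (∑ q ∈ Icc 1 (n+1), (stirling2 (n-j) q : ℝ) * c q)) := by
      intro j hj
      simp only [mem_range] at hj
      have h1 : fcum a (j+1) = ∑ p ∈ Icc 1 (n+1), (stirling2 (j+1) p : ℝ) * fcum c p := by
        rw [IH j hj]
        apply Finset.sum_subset (Finset.Icc_subset_Icc_right (by omega))
        intro p hp hp2
        simp only [mem_Icc] at hp hp2
        rw [stirling2_eq_zero (show j+1 < p by omega)]
        simp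
      have h2 : a (n-j) = ∑ q ∈ Icc 1 (n+1), (stirling2 (n-j) q : ℝ) * c q := by
        rw [hac (n-j) (by omega)]
        apply Finset.sum_subset (Finset.Icc_subset_Icc_right (by omega))
        intro q hq hq2
        simp only [mem_Icc] at hq hq2
        rw [stirling2_eq_zero (show n-j < q by omega)]
        simp
      rw [h1, h2]; ring
    rw [Finset.sum_congr rfl hterm]
    have hext : ∑ j ∈ range n, ((n.choose j : ℝ)
          * ((∑ p ∈ Icc 1 (n+1), (stirling2 (j+1) p : ℝ) * fcum c p)
              * (∑ q ∈ Icc 1 (n+1), (stirling2 (n-j) q : ℝ) * c q)))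
        = ∑ j ∈ range (n+1), ((n.choose j : ℝ)
          * ((∑ p ∈ Icc 1 (n+1), (stirling2 (j+1) p : ℝ) * fcum c p)
              * (∑ q ∈ Icc 1 (n+1), (stirling2 (n-j) q : ℝ) * c q))) := by
      rw [Finset.sum_range_succ]
      have hz : (∑ q ∈ Icc 1 (n+1), (stirling2 (n-n) q : ℝ) * c q) = 0 := by
        apply Finset.sum_eq_zero
        intro q hq
        simp only [mem_Icc] at hq
        rw [stirling2_eq_zero (show n-n < q by omega)]
        simp
      rw [hz]
      ring
    rw [hext, Rlemma]
    have hd : ∀ p ∈ Icc 1 (n+1), (stirling2 (n+1) p : ℝ) * fcum c p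
        = (stirling2 (n+1) p : ℝ) * c p
          - (stirling2 (n+1) p : ℝ)
            * ∑ m ∈ range (p-1), ((p-1).choose m : ℝ) * fcum c (m+1) * c (p-1-m) := by
      intro p hp
      simp only [mem_Icc] at hp
      obtain ⟨p', rfl⟩ : ∃ p', p = p' + 1 := ⟨p - 1, by omega⟩
      rw [fcum_succ c p']
      simp only [Nat.add_sub_cancel]
      ring
    rw [Finset.sum_congr rfl hd, Finset.sum_sub_distrib, ← hac (n+1) (by omega)]
    congr 1
    rw [Icc_one (fun p => (stirling2 (n+1) p : ℝ)
        * ∑ m ∈ range (p-1), ((p-1).choose m : ℝ) * fcum c (m+1) * c (p-1-m)) n]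
    rw [← Tlemma (fcum c) c n]
    refine Finset.sum_congr rfl fun s _ => ?_
    simp only [Nat.add_sub_cancel]
  intro k hk
  obtain ⟨k', rfl⟩ : ∃ k', k = k' + 1 := ⟨k - 1, by omega⟩
  rw [hb, main k']
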